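/- Let (Ω, P) be a probability space, X a finite index set with |X| ≥ 2, and for each x ∈ X let Z_x : Ω → ℝ be a random variable whose law is the Gaussian distribution N(μ_x, σ_x²), where μ_x ∈ ℝ and 0 ≤ σ_x ≤ 1. Set s = 2·log(|X|/2). Then E[ max_{x ∈ X} Z_x ] ≤ ∫ max_{x ∈ X} ( μ_x + √(s + z) · σ_x ) dν(z), where ν = Exp(1/2) is the exponential distribution with rate 1/2; equivalently, E[max_x Z_x] ≤ E[ max_x ( μ_x + √ζ σ_x ) ], where ζ = s + Z with Z ∼ Exp(1/2), i.e., ζ follows the two-parameter exponential distribution with location s and rate 1/2. -/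

import Mathlib

open MeasureTheory ProbabilityTheory Real Set
open scoped ENNReal NNReal

namespace RGP

lemma integrable_finset_sup' {α X : Type*} [MeasurableSpace α] {ρ : Measure α}
    {t : Finset X} (ht : t.Nonempty) {g : X → α → ℝ}
    (hg : ∀ x, Integrable (g x) ρ) :
    Integrable (fun a => t.sup' ht fun x => g x a) ρ := by
  induction ht using Finset.Nonempty.cons_induction with
  | singleton x => simpa using hg x
  | cons x t hx hne ih =>
      simp only [Finset.sup'_cons hne]
      exact (hg x).sup ih

lemma std_gauss_tail {u : ℝ} (hu : 0 ≤ u) :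
    gaussianReal 0 1 (Set.Ioi u) ≤ ENNReal.ofReal (Real.exp (-u ^ 2 / 2) / 2) := by
  rw [gaussianReal_apply_eq_integral 0 one_ne_zero]
  apply ENNReal.ofReal_le_ofReal
  have hemb : MeasurableEmbedding (fun x : ℝ => x + u) :=
    (Homeomorph.addRight u).isClosedEmbedding.measurableEmbedding
  have hpre : (fun x : ℝ => x + u) ⁻¹' (Ioi u) = Ioi 0 := by
    ext x; simp
  have hshift : ∫ x in Ioi u, gaussianPDFReal 0 1 x
      = ∫ x in Ioi 0, gaussianPDFReal 0 1 (x + u) := by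
    have h := hemb.setIntegral_map (μ := volume) (gaussianPDFReal 0 1) (Ioi u)
    rw [map_add_right_eq_self volume u, hpre] at h
    exact h
  rw [hshift]
  have hint : Integrable (gaussianPDFReal 0 1) volume := integrable_gaussianPDFReal 0 1
  have hint_shift : Integrable (fun x => gaussianPDFReal 0 1 (x + u)) volume := by
    have h := hemb.integrable_map_iff (μ := volume) (g := gaussianPDFReal 0 1)
    rw [map_add_right_eq_self volume u] at h
    exact h.mp hint
  have hptwise : ∀ x ∈ Ioi (0:ℝ), gaussianPDFReal 0 1 (x + u)
      ≤ Real.exp (-u ^ 2 / 2) * gaussianPDFReal 0 1 x := by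
    intro x hx
    simp only [gaussianPDFReal, NNReal.coe_one, mul_one, sub_zero]
    rw [show Real.exp (-u ^ 2 / 2) * ((√(2 * π))⁻¹ * rexp (-x ^ 2 / 2))
        = (√(2 * π))⁻¹ * (rexp (-u ^ 2 / 2) * rexp (-x ^ 2 / 2)) by ring, ← Real.exp_add]
    apply mul_le_mul_of_nonneg_left _ (by positivity)
    apply Real.exp_le_exp.mpr
    have hx0 : (0:ℝ) ≤ x := le_of_lt hx
    nlinarith [mul_nonneg hx0 hu]
  have h12 : ∫ x in Ioi (0:ℝ), gaussianPDFReal 0 1 x = 1 / 2 := by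
    simp only [gaussianPDFReal, NNReal.coe_one, mul_one, sub_zero]
    rw [integral_const_mul]
    have harg : ∀ x : ℝ, -x ^ 2 / 2 = -(2⁻¹ : ℝ) * x ^ 2 := fun x => by ring
    simp_rw [harg]
    rw [integral_gaussian_Ioi]
    have h2π : π / 2⁻¹ = 2 * π := by ring
    rw [h2π]
    have hpos : (0:ℝ) < √(2 * π) := Real.sqrt_pos.mpr (by positivity)
    field_simp
  calc ∫ x in Ioi 0, gaussianPDFReal 0 1 (x + u)
      ≤ ∫ x in Ioi 0, Real.exp (-u ^ 2 / 2) * gaussianPDFReal 0 1 x :=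
        setIntegral_mono_on hint_shift.integrableOn
          (hint.const_mul _).integrableOn measurableSet_Ioi hptwise
    _ = Real.exp (-u ^ 2 / 2) * ∫ x in Ioi 0, gaussianPDFReal 0 1 x := by
        rw [integral_const_mul]
    _ = Real.exp (-u ^ 2 / 2) / 2 := by rw [h12]; ring


lemma gauss_tail (m σx : ℝ) (hσ : 0 ≤ σx) {u : ℝ} (hu : 0 ≤ u) :
    gaussianReal m (Real.toNNReal (σx ^ 2)) {y | m + u * σx < y}
      ≤ ENNReal.ofReal (Real.exp (-u ^ 2 / 2) / 2) := by
  have hset : {y : ℝ | m + u * σx < y} = Ioi (m + u * σx) := rfl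
  rcases eq_or_lt_of_le hσ with h0 | h0
  · subst h0
    have htn : Real.toNNReal ((0:ℝ) ^ 2) = 0 := by norm_num
    rw [htn, gaussianReal_zero_var, hset]
    simp only [mul_zero, add_zero]
    rw [Measure.dirac_apply' _ measurableSet_Ioi,
      Set.indicator_of_notMem (by simp : m ∉ Ioi m)]
    exact zero_le
  · have hv : Real.toNNReal (σx ^ 2) ≠ 0 := by
      simp only [ne_eq, Real.toNNReal_eq_zero, not_le]
      positivity
    have hmap : gaussianReal m (Real.toNNReal (σx ^ 2))
        = Measure.map (fun x => σx * x + m) (gaussianReal 0 1) := by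
      have h1 := gaussianReal_map_const_mul (μ := 0) (v := 1) σx
      rw [show (fun x : ℝ => σx * x + m) = (fun y => y + m) ∘ (fun x => σx * x) from rfl,
        ← Measure.map_map (measurable_add_const m) (measurable_const_mul σx),
        show (fun x : ℝ => σx * x) = (σx * ·) from rfl, h1,
        gaussianReal_map_add_const, mul_zero, zero_add]
      congr 1
      ext
      simp [Real.coe_toNNReal _ (sq_nonneg σx)]
    rw [hset, hmap, Measure.map_apply (by fun_prop) measurableSet_Ioi]
    have hpre : (fun x : ℝ => σx * x + m) ⁻¹' Ioi (m + u * σx) = Ioi u := by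
      ext x
      simp only [mem_preimage, mem_Ioi]
      constructor <;> intro h <;> nlinarith
    rw [hpre]
    exact std_gauss_tail hu

lemma expMeasure_apply {s : Set ℝ} (hs : MeasurableSet s) :
    expMeasure (1/2 : ℝ) s = ∫⁻ x in s, exponentialPDF (1/2) x := by
  rw [expMeasure, gammaMeasure, withDensity_apply _ hs]
  rfl

lemma expMeasure_Iio_zero : expMeasure (1/2 : ℝ) (Iio 0) = 0 := by
  rw [expMeasure_apply measurableSet_Iio]
  exact lintegral_exponentialPDF_of_nonpos le_rfl

lemma ae_nonneg_exp : ∀ᵐ z ∂(expMeasure (1/2 : ℝ)), 0 ≤ z := by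
  rw [ae_iff]
  have hset : {z : ℝ | ¬ 0 ≤ z} = Iio 0 := by ext z; simp [not_le]
  rw [hset]
  exact expMeasure_Iio_zero

lemma expMeasure_Ioi {a : ℝ} (ha : 0 ≤ a) :
    expMeasure (1/2 : ℝ) (Ioi a) = ENNReal.ofReal (Real.exp (-(a / 2))) := by
  haveI : IsProbabilityMeasure (expMeasure (1/2 : ℝ)) :=
    isProbabilityMeasure_expMeasure (by norm_num)
  have hIic : expMeasure (1/2 : ℝ) (Iic a) = ENNReal.ofReal (1 - rexp (-(1/2 * a))) := by
    rw [expMeasure_apply measurableSet_Iic,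
      lintegral_exponentialPDF_eq_antiDeriv (by norm_num) a, if_pos ha]
  have h1 : rexp (-(1/2 * a)) ≤ 1 := by
    rw [Real.exp_le_one_iff]
    linarith
  rw [(by simp : Ioi a = (Iic a)ᶜ), measure_compl measurableSet_Iic (measure_ne_top _ _),
    hIic, measure_univ, (by simp : (1 : ℝ≥0∞) = ENNReal.ofReal 1),
    ← ENNReal.ofReal_sub 1 (by linarith)]
  congr 1
  ring


lemma exponentialPDFReal_eq' (x : ℝ) :
    exponentialPDFReal (1/2) x = if 0 ≤ x then (1/2) * rexp (-(1/2 * x)) else 0 := by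
  rw [exponentialPDFReal, gammaPDFReal]
  simp only [rpow_one, Real.Gamma_one, div_one, sub_self, rpow_zero, mul_one]

lemma integrable_mul_expPDF :
    Integrable (fun x : ℝ => x * exponentialPDFReal (1/2) x) volume := by
  have h1 : IntegrableOn (fun x : ℝ => x * exponentialPDFReal (1/2) x) (Iio 0) volume := by
    refine (integrableOn_congr_fun ?_ measurableSet_Iio).mpr (integrableOn_zero)
    intro x hx
    show x * exponentialPDFReal (1/2) x = 0
    rw [exponentialPDFReal_eq', if_neg (not_le.mpr hx), mul_zero]
  have h2 : IntegrableOn (fun x : ℝ => x * exponentialPDFReal (1/2) x) (Ici 0) volume := by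
    have hg : IntegrableOn (fun x : ℝ => 4 * rexp (-(4⁻¹ : ℝ) * x)) (Ici 0) volume := by
      refine Integrable.const_mul ?_ 4
      exact (integrableOn_Ici_iff_integrableOn_Ioi).mpr
        (exp_neg_integrableOn_Ioi 0 (by norm_num))
    refine Integrable.mono' hg ?_ ?_
    · exact ((measurable_id.mul (measurable_exponentialPDFReal (1/2))).aestronglyMeasurable).restrict
    · refine Filter.Eventually.of_forall fun x => ?_
      rw [exponentialPDFReal_eq']
      rcases le_or_gt 0 x with hx | hx
      · rw [if_pos hx]
        have e1 : rexp (-(1/2 * x)) = rexp (-(4⁻¹:ℝ) * x) * rexp (-(4⁻¹:ℝ) * x) := by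
          rw [← Real.exp_add]; ring_nf
        have e2 : x / 4 + 1 ≤ rexp (x / 4) := Real.add_one_le_exp _
        have e3 : rexp (-(4⁻¹:ℝ) * x) * rexp (x / 4) = 1 := by
          rw [← Real.exp_add]; ring_nf; exact Real.exp_zero
        have e4 : (0:ℝ) < rexp (-(4⁻¹:ℝ) * x) := Real.exp_pos _
        have e5 : (0:ℝ) < rexp (x / 4) := Real.exp_pos _
        have hxe : x * rexp (-(4⁻¹:ℝ) * x) ≤ 4 := by
          have : x ≤ 4 * rexp (x / 4) := by nlinarith
          calc x * rexp (-(4⁻¹:ℝ) * x) ≤ (4 * rexp (x/4)) * rexp (-(4⁻¹:ℝ) * x) := by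
                exact mul_le_mul_of_nonneg_right this e4.le
            _ = 4 * (rexp (-(4⁻¹:ℝ) * x) * rexp (x/4)) := by ring
            _ = 4 := by rw [e3]; ring
        have hnorm : ‖x * ((1:ℝ)/2 * rexp (-(1/2 * x)))‖ = x * (1/2 * rexp (-(1/2 * x))) := by
          rw [Real.norm_eq_abs, abs_of_nonneg]
          positivity
        rw [hnorm, e1]
        nlinarith
      · rw [if_neg (not_le.mpr hx), mul_zero, norm_zero]
        positivity
  have := h1.union h2
  rwa [Iio_union_Ici, integrableOn_univ] at this

lemma integrable_id_exp : Integrable (fun z : ℝ => z) (expMeasure (1/2 : ℝ)) := by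
  have heq : expMeasure (1/2 : ℝ)
      = volume.withDensity (fun x => ENNReal.ofReal (exponentialPDFReal (1/2) x)) := rfl
  rw [heq, integrable_withDensity_iff
    ((measurable_exponentialPDFReal (1/2)).ennreal_ofReal)
    (Filter.Eventually.of_forall fun x => ENNReal.ofReal_lt_top)]
  have h2 : (fun x : ℝ => x * (ENNReal.ofReal (exponentialPDFReal (1/2) x)).toReal)
      = fun x => x * exponentialPDFReal (1/2) x := by
    funext x
    rw [ENNReal.toReal_ofReal (exponentialPDFReal_nonneg (by norm_num) x)]
  rw [h2]
  exact integrable_mul_expPDF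

lemma integrable_id_gaussian (m : ℝ) (v : ℝ≥0) :
    Integrable (fun x : ℝ => x) (gaussianReal m v) := by
  by_cases hv : v = 0
  · subst hv
    rw [gaussianReal_zero_var]
    refine (integrable_const m).congr ?_
    have hset : {x : ℝ | ¬ ((fun _ => m) x = (fun y => y) x)} = {m}ᶜ := by
      ext x
      simp [eq_comm]
    rw [Filter.EventuallyEq, ae_iff, hset,
      Measure.dirac_apply' _ (measurableSet_singleton m).compl]
    simp
  · rw [gaussianReal_of_var_ne_zero _ hv,
      integrable_withDensity_iff (measurable_gaussianPDF _ _)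
        (Filter.Eventually.of_forall fun x => ENNReal.ofReal_lt_top)]
    have heq : (fun x : ℝ => x * (gaussianPDF m v x).toReal)
        = fun x => x * gaussianPDFReal m v x := by
      funext x
      rw [gaussianPDF, ENNReal.toReal_ofReal (gaussianPDFReal_nonneg _ _ _)]
    rw [heq]
    have hvpos : (0:ℝ) < (v : ℝ) := by
      exact_mod_cast pos_iff_ne_zero.mpr hv
    have hb : (0:ℝ) < (2 * (v:ℝ))⁻¹ := by positivity
    have hemb : MeasurableEmbedding (fun x : ℝ => x + m) :=
      (Homeomorph.addRight m).isClosedEmbedding.measurableEmbedding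
    rw [show (volume : Measure ℝ) = Measure.map (fun x => x + m) volume from
      (map_add_right_eq_self volume m).symm, hemb.integrable_map_iff]
    have hcomp : ((fun x : ℝ => x * gaussianPDFReal m v x) ∘ fun x => x + m)
        = fun x : ℝ => (√(2 * π * v))⁻¹ * (x * rexp (-(2 * (v:ℝ))⁻¹ * x ^ 2))
          + ((√(2 * π * v))⁻¹ * m) * rexp (-(2 * (v:ℝ))⁻¹ * x ^ 2) := by
      funext x
      simp only [Function.comp_apply, gaussianPDFReal, add_sub_cancel_right]
      rw [show -x ^ 2 / (2 * (v:ℝ)) = -(2 * (v:ℝ))⁻¹ * x ^ 2 by ring]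
      ring
    rw [hcomp]
    apply Integrable.add
    · refine Integrable.const_mul ?_ _
      have h := integrable_rpow_mul_exp_neg_mul_sq hb (s := 1) (by norm_num)
      simpa [Real.rpow_one] using h
    · exact (integrable_exp_neg_mul_sq hb).const_mul _

lemma integral_le_of_tail_le {Ω₁ Ω₂ : Type*} [MeasurableSpace Ω₁] [MeasurableSpace Ω₂]
    (P : Measure Ω₁) (Q : Measure Ω₂) [IsProbabilityMeasure P] [IsProbabilityMeasure Q]
    {f : Ω₁ → ℝ} {g : Ω₂ → ℝ} (hf : Integrable f P) (hg : Integrable g Q)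
    (c : ℝ) (hgc : ∀ᵐ z ∂Q, c ≤ g z)
    (hdom : ∀ t : ℝ, c < t → P {ω | t < f ω} ≤ Q {z | t < g z}) :
    ∫ ω, f ω ∂P ≤ ∫ z, g z ∂Q := by
  have hmax : Integrable (fun ω => f ω ⊔ c) P := hf.sup (integrable_const c)
  set F : Ω₁ → ℝ := fun ω => (f ω ⊔ c) - c with hF
  set G : Ω₂ → ℝ := fun z => g z - c with hG
  have hFint : Integrable F P := hmax.sub (integrable_const c)
  have hGint : Integrable G Q := hg.sub (integrable_const c)
  have hFnn : 0 ≤ᵐ[P] F := Filter.Eventually.of_forall fun ω => by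
    simp only [hF, Pi.zero_apply, sub_nonneg, le_sup_right]
  have hGnn : 0 ≤ᵐ[Q] G := hgc.mono fun z hz => by
    simp only [hG, Pi.zero_apply, sub_nonneg]; exact hz
  have key : ∫⁻ ω, ENNReal.ofReal (F ω) ∂P ≤ ∫⁻ z, ENNReal.ofReal (G z) ∂Q := by
    rw [lintegral_eq_lintegral_meas_lt P hFnn hFint.aemeasurable,
        lintegral_eq_lintegral_meas_lt Q hGnn hGint.aemeasurable]
    refine lintegral_mono_ae ?_
    filter_upwards [ae_restrict_mem measurableSet_Ioi] with t ht
    have htpos : (0:ℝ) < t := ht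
    have hset1 : {ω | t < F ω} = {ω | c + t < f ω} := by
      ext ω
      simp only [hF, mem_setOf_eq, lt_sub_iff_add_lt', lt_sup_iff]
      constructor
      · rintro (h | h)
        · exact h
        · exact absurd h (by linarith)
      · exact fun h => Or.inl h
    have hset2 : {z | t < G z} = {z | c + t < g z} := by
      ext z
      simp only [hG, mem_setOf_eq, lt_sub_iff_add_lt']
    rw [hset1, hset2]
    exact hdom (c + t) (by linarith)
  have h1 : ∫ ω, F ω ∂P = (∫⁻ ω, ENNReal.ofReal (F ω) ∂P).toReal :=
    integral_eq_lintegral_of_nonneg_ae hFnn hFint.aestronglyMeasurable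
  have h2 : ∫ z, G z ∂Q = (∫⁻ z, ENNReal.ofReal (G z) ∂Q).toReal :=
    integral_eq_lintegral_of_nonneg_ae hGnn hGint.aestronglyMeasurable
  have hfin : ∫⁻ z, ENNReal.ofReal (G z) ∂Q ≠ ⊤ := hGint.lintegral_lt_top.ne
  have hFG : ∫ ω, F ω ∂P ≤ ∫ z, G z ∂Q := by
    rw [h1, h2]
    exact ENNReal.toReal_mono hfin key
  have hfF : ∫ ω, f ω ∂P ≤ ∫ ω, f ω ⊔ c ∂P :=
    integral_mono hf hmax fun ω => le_sup_left
  have e1 : ∫ ω, F ω ∂P = (∫ ω, f ω ⊔ c ∂P) - c := by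
    rw [hF, integral_sub hmax (integrable_const c), integral_const, probReal_univ]
    simp
  have e2 : ∫ z, G z ∂Q = (∫ z, g z ∂Q) - c := by
    rw [hG, integral_sub hg (integrable_const c), integral_const, probReal_univ]
    simp
  linarith

end RGP


theorem expected_max_gaussian_le_randomized_ucb
    {Ω : Type*} [MeasurableSpace Ω] (P : Measure Ω) [IsProbabilityMeasure P]
    {X : Type*} [Fintype X] [Nonempty X] (hX : 2 ≤ Fintype.card X)
    (μ : X → ℝ) (σ : X → ℝ) (hσ : ∀ x, 0 ≤ σ x) (hσ1 : ∀ x, σ x ≤ 1)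
    (Z : X → Ω → ℝ)
    (hZ : ∀ x, Measure.map (Z x) P = gaussianReal (μ x) (Real.toNNReal ((σ x) ^ 2)))
    (s : ℝ) (hs : s = 2 * Real.log ((Fintype.card X : ℝ) / 2)) :
    ∫ ω, Finset.univ.sup' Finset.univ_nonempty (fun x => Z x ω) ∂P ≤
      ∫ z, Finset.univ.sup' Finset.univ_nonempty
          (fun x => μ x + Real.sqrt (s + z) * σ x) ∂(expMeasure (1 / 2)) := by
  classical
  have hcard : (2:ℝ) ≤ (Fintype.card X : ℝ) := by exact_mod_cast hX
  have hcardpos : (0:ℝ) < (Fintype.card X : ℝ) / 2 := by linarith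
  have hs0 : 0 ≤ s := by
    rw [hs]
    have : 0 ≤ Real.log ((Fintype.card X : ℝ) / 2) := Real.log_nonneg (by linarith)
    linarith
  haveI hQ : IsProbabilityMeasure (expMeasure (1/2 : ℝ)) :=
    isProbabilityMeasure_expMeasure (by norm_num)
  have hne : (Finset.univ : Finset X).Nonempty := Finset.univ_nonempty
  set U : ℝ → ℝ := fun z => Finset.univ.sup' hne (fun x => μ x + Real.sqrt (s + z) * σ x)
    with hU
  set f : Ω → ℝ := fun ω => Finset.univ.sup' hne (fun x => Z x ω) with hfdef
  have hZae : ∀ x, AEMeasurable (Z x) P := fun x =>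
    aemeasurable_of_map_neZero (by rw [hZ x]; infer_instance)
  have hZint : ∀ x, Integrable (Z x) P := by
    intro x
    have h := RGP.integrable_id_gaussian (μ x) (Real.toNNReal ((σ x) ^ 2))
    rw [← hZ x, integrable_map_measure h.aestronglyMeasurable (hZae x)] at h
    exact h
  have hfint : Integrable f P := RGP.integrable_finset_sup' hne hZint
  have hUmono : Monotone U := by
    intro a b hab
    apply Finset.sup'_le
    intro x hx
    refine le_trans ?_ (Finset.le_sup' _ (Finset.mem_univ x))
    have h1 : Real.sqrt (s + a) ≤ Real.sqrt (s + b) := Real.sqrt_le_sqrt (by linarith)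
    have h2 := mul_le_mul_of_nonneg_right h1 (hσ x)
    linarith
  have hUcont : Continuous U := by
    apply Continuous.finset_sup'_apply hne
    intro x hx
    exact continuous_const.add
      ((Real.continuous_sqrt.comp (continuous_const.add continuous_id)).mul continuous_const)
  have hUint : Integrable U (expMeasure (1/2 : ℝ)) := by
    refine RGP.integrable_finset_sup' hne
      (g := fun x z => μ x + Real.sqrt (s + z) * σ x) ?_
    intro x
    have hsq : Integrable (fun z : ℝ => Real.sqrt (s + z)) (expMeasure (1/2 : ℝ)) := by
      refine Integrable.mono' ((integrable_const (1 + s)).add RGP.integrable_id_exp) ?_ ?_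
      · exact (Real.continuous_sqrt.comp (continuous_const.add continuous_id)).aestronglyMeasurable
      · filter_upwards [RGP.ae_nonneg_exp] with z hz
        have h1 : 0 ≤ s + z := by linarith
        have h2 := Real.sq_sqrt h1
        have h3 := Real.sqrt_nonneg (s + z)
        rw [Real.norm_eq_abs, abs_of_nonneg h3]
        simp only [Pi.add_apply]
        nlinarith
    exact (integrable_const (μ x)).add (hsq.mul_const (σ x))
  by_cases hallzero : ∀ x, σ x = 0
  · -- degenerate case
    have hUz : ∀ z, U z = Finset.univ.sup' hne μ := fun z =>
      Finset.sup'_congr hne rfl (fun x _ => by rw [hallzero x]; ring)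
    have hfae : f =ᵐ[P] fun _ => Finset.univ.sup' hne μ := by
      have hx : ∀ x : X, (Z x) =ᵐ[P] fun _ => μ x := by
        intro x
        have hzv : Measure.map (Z x) P = Measure.dirac (μ x) := by
          rw [hZ x, hallzero x]
          norm_num
        have hzero : P ((Z x) ⁻¹' ({μ x}ᶜ)) = 0 := by
          rw [← Measure.map_apply_of_aemeasurable (hZae x)
            (measurableSet_singleton (μ x)).compl, hzv,
            Measure.dirac_apply' _ (measurableSet_singleton (μ x)).compl]
          simp
        have hseteq : {ω | ¬ (Z x ω = (fun _ => μ x) ω)} = (Z x) ⁻¹' ({μ x}ᶜ) := by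
          ext ω
          simp
        rw [Filter.EventuallyEq, ae_iff, hseteq]
        exact hzero
      have hall : ∀ᵐ ω ∂P, ∀ x : X, Z x ω = μ x := (ae_all_iff).mpr hx
      filter_upwards [hall] with ω hω
      exact Finset.sup'_congr hne rfl (fun x _ => hω x)
    have lhs_eq : ∫ ω, f ω ∂P = Finset.univ.sup' hne μ := by
      rw [integral_congr_ae hfae, integral_const, probReal_univ]
      simp
    have rhs_eq : ∫ z, U z ∂(expMeasure (1/2 : ℝ)) = Finset.univ.sup' hne μ := by
      rw [show U = fun _ => Finset.univ.sup' hne μ from funext hUz, integral_const,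
        probReal_univ]
      simp
    exact le_of_eq (lhs_eq.trans rhs_eq.symm)
  · push_neg at hallzero
    obtain ⟨x₀, hx₀⟩ := hallzero
    have hσ₀ : 0 < σ x₀ := lt_of_le_of_ne (hσ x₀) (Ne.symm hx₀)
    -- union + tail bound
    have htail : ∀ z : ℝ, 0 ≤ z →
        P {ω | U z < f ω} ≤ ENNReal.ofReal (Real.exp (-(z / 2))) := by
      intro z hz
      have hsz : 0 ≤ s + z := by linarith
      set u := Real.sqrt (s + z) with hu
      have hu0 : 0 ≤ u := Real.sqrt_nonneg _
      have hu2 : u ^ 2 = s + z := Real.sq_sqrt hsz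
      have hsub : {ω | U z < f ω} ⊆ ⋃ x : X, {ω | μ x + u * σ x < Z x ω} := by
        intro ω hω
        obtain ⟨x, hxmem, hxeq⟩ := Finset.exists_mem_eq_sup' hne (fun x => Z x ω)
        refine Set.mem_iUnion.mpr ⟨x, ?_⟩
        have h1 : μ x + u * σ x ≤ U z :=
          Finset.le_sup' (f := fun x => μ x + Real.sqrt (s + z) * σ x) (Finset.mem_univ x)
        have h2 : U z < f ω := hω
        have h3 : f ω = Z x ω := hxeq
        simp only [Set.mem_setOf_eq]
        rw [← h3]
        exact lt_of_le_of_lt h1 h2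
      have hxle : ∀ x : X, P {ω | μ x + u * σ x < Z x ω}
          ≤ ENNReal.ofReal (Real.exp (-u ^ 2 / 2) / 2) := by
        intro x
        have hmeq : P {ω | μ x + u * σ x < Z x ω}
            = (Measure.map (Z x) P) {y | μ x + u * σ x < y} := by
          rw [show {y : ℝ | μ x + u * σ x < y} = Set.Ioi (μ x + u * σ x) from rfl,
            Measure.map_apply_of_aemeasurable (hZae x) measurableSet_Ioi]
          rfl
        rw [hmeq, hZ x]
        exact RGP.gauss_tail (μ x) (σ x) (hσ x) hu0
      have hcalc : P {ω | U z < f ω}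
          ≤ (Fintype.card X : ℝ≥0∞) * ENNReal.ofReal (Real.exp (-u ^ 2 / 2) / 2) := by
        calc P {ω | U z < f ω} ≤ ∑' x : X, P {ω | μ x + u * σ x < Z x ω} :=
              le_trans (measure_mono hsub) (measure_iUnion_le _)
          _ ≤ ∑' x : X, ENNReal.ofReal (Real.exp (-u ^ 2 / 2) / 2) :=
              ENNReal.tsum_le_tsum hxle
          _ = (Fintype.card X : ℝ≥0∞) * ENNReal.ofReal (Real.exp (-u ^ 2 / 2) / 2) := by
              rw [tsum_fintype]
              simp [Finset.sum_const, Finset.card_univ, nsmul_eq_mul]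
      refine le_trans hcalc (le_of_eq ?_)
      rw [show (Fintype.card X : ℝ≥0∞) = ENNReal.ofReal (Fintype.card X : ℝ) by
          rw [ENNReal.ofReal_natCast],
        ← ENNReal.ofReal_mul (by positivity)]
      congr 1
      rw [hu2, hs]
      have harg : -(2 * Real.log ((Fintype.card X : ℝ) / 2) + z) / 2
          = -Real.log ((Fintype.card X : ℝ) / 2) + -(z / 2) := by ring
      rw [harg, Real.exp_add, Real.exp_neg, Real.exp_log hcardpos]
      have hc0 : (Fintype.card X : ℝ) ≠ 0 := by positivity
      field_simp
    -- unboundedness of U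
    have hUnb : ∀ t : ℝ, ∃ z, 0 ≤ z ∧ t < U z := by
      intro t
      set a := max 0 ((t - μ x₀ + 1) / σ x₀) with ha
      refine ⟨a ^ 2, sq_nonneg a, ?_⟩
      have ha0 : 0 ≤ a := le_max_left _ _
      have h1 : a ≤ Real.sqrt (s + a ^ 2) := by
        calc a = Real.sqrt (a ^ 2) := (Real.sqrt_sq ha0).symm
          _ ≤ Real.sqrt (s + a ^ 2) := Real.sqrt_le_sqrt (by linarith)
      have h3 : (t - μ x₀ + 1) / σ x₀ ≤ a := le_max_right _ _
      have h4 : t - μ x₀ + 1 ≤ a * σ x₀ := by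
        rw [div_le_iff₀ hσ₀] at h3
        linarith
      have h5 : a * σ x₀ ≤ Real.sqrt (s + a ^ 2) * σ x₀ :=
        mul_le_mul_of_nonneg_right h1 (hσ x₀)
      have h2 : t < μ x₀ + Real.sqrt (s + a ^ 2) * σ x₀ := by linarith
      exact lt_of_lt_of_le h2
        (Finset.le_sup' (f := fun x => μ x + Real.sqrt (s + a ^ 2) * σ x) (Finset.mem_univ x₀))
    -- apply dominance
    have main : ∫ ω, f ω ∂P ≤ ∫ z, U z ∂(expMeasure (1/2 : ℝ)) := by
      refine RGP.integral_le_of_tail_le P (expMeasure (1/2 : ℝ)) hfint hUint (U 0) ?_ ?_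
      · filter_upwards [RGP.ae_nonneg_exp] with z hz
        exact hUmono hz
      · intro t ht
        set Sset := {z : ℝ | 0 ≤ z ∧ t < U z} with hSdef
        have hSne : Sset.Nonempty := hUnb t
        have hSbdd : BddBelow Sset := ⟨0, fun z hz => hz.1⟩
        set zt := sInf Sset with hzt
        have hzt0 : 0 ≤ zt := le_csInf hSne fun z hz => hz.1
        have hUzt : U zt ≤ t := by
          rcases eq_or_lt_of_le hzt0 with h0 | h0
          · rw [← h0]
            exact ht.le
          · have htend : Filter.Tendsto U (nhdsWithin zt (Set.Iio zt)) (nhds (U zt)) :=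
              (hUcont.tendsto zt).mono_left nhdsWithin_le_nhds
            refine le_of_tendsto htend ?_
            filter_upwards [Ioo_mem_nhdsLT h0] with z hz
            by_contra hcon
            push_neg at hcon
            exact absurd (csInf_le hSbdd ⟨hz.1.le, hcon⟩) (not_le.mpr hz.2)
        calc P {ω | t < f ω} ≤ P {ω | U zt < f ω} :=
              measure_mono (fun ω hω => lt_of_le_of_lt hUzt hω)
          _ ≤ ENNReal.ofReal (Real.exp (-(zt / 2))) := htail zt hzt0
          _ = expMeasure (1/2 : ℝ) (Set.Ioi zt) := (RGP.expMeasure_Ioi hzt0).symm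
          _ ≤ expMeasure (1/2 : ℝ) {z | t < U z} := by
              refine measure_mono ?_
              intro z hz
              obtain ⟨w, hwS, hwz⟩ := (csInf_lt_iff hSbdd hSne).mp hz
              exact lt_of_lt_of_le hwS.2 (hUmono hwz.le)
    exact main
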